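/- For every b ≥ 2, the partition (b, b, 1) of 2b+1 satisfies |η_{(b,b,1)}| ≤ D_{b+1} + b·D_b, with equality if and only if b = 2. -/

import Mathlib

/-- Derangement numbers: `D 0 = 1`, `D (m+1) = (m+1) * D m + (-1)^(m+1)`. -/
def derange : ℕ → ℤ
  | 0 => 1
  | n + 1 => (n + 1 : ℤ) * derange n + (-1) ^ (n + 1)

/-- Subtract one from every part and discard the parts that become zero
(deleting the first column of the Ferrers diagram). -/
def strip (l : List ℕ) : List ℕ := (l.map (· - 1)).filter (fun x => 0 < x)

lemma strip_measure (l : List ℕ) : (strip l).sum + (strip l).length ≤ l.sum := by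
  induction l with
  | nil => simp [strip]
  | cons x t ih =>
      simp only [strip, List.map_cons, List.filter_cons] at ih ⊢
      by_cases hx : 0 < x - 1 <;> simp [hx] <;> omega

/-- The eigenvalues of the derangement graph, defined by Renteln's recurrence:
`η ∅ = 1` and `η λ = (-1)^h (η (λ-ĥ) + (-1)^{λ₁} h η (λ-ĉ))`, where
`h = λ₁ + r - 1` is the hook size, `λ-ĥ = strip (tail λ)` removes the hook,
and `λ-ĉ = strip λ` removes the first column. -/
def eta : List ℕ → ℤ
  | [] => 1
  | a :: t =>
      (-1) ^ (a + t.length) *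
        (eta (strip t) + (-1) ^ a * ((a : ℤ) + t.length) * eta (strip (a :: t)))
  termination_by l => l.sum + l.length
  decreasing_by
  · have h1 := strip_measure t
    simp only [List.sum_cons, List.length_cons]
    omega
  · have h1 := strip_measure (a :: t)
    simp only [List.sum_cons, List.length_cons] at h1 ⊢
    omega

/-- `l` is (the list of parts of) a partition of `n`: weakly decreasing,
all parts positive, summing to `n`. -/
def IsPartition (n : ℕ) (l : List ℕ) : Prop :=
  l.Pairwise (· ≥ ·) ∧ (∀ x ∈ l, 0 < x) ∧ l.sum = n

/-- The hook partition `(a, 1^(n-a))` of `n`. -/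
def hookP (n a : ℕ) : List ℕ := a :: List.replicate (n - a) 1

lemma strip_one (k : ℕ) : strip [k+2] = [k+1] := by simp [strip]
lemma strip_two (k : ℕ) : strip [k+2, k+2] = [k+1, k+1] := by simp [strip]
lemma eta_single : ∀ m, eta [m] = derange m := by
  intro m
  match m with
  | 0 => rw [eta]; simp [strip, eta, derange]
  | 1 => rw [eta]; simp [strip, eta, derange]
  | (k+2) =>
      rw [eta, strip_one, eta_single (k+1)]
      have hs : ((-1:ℤ))^(k+2) * (-1)^(k+2) = 1 := by
        rw [← pow_add]; exact Even.neg_one_pow ⟨k+2, by ring⟩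
      show ((-1:ℤ)) ^ (k + 2 + ([]:List ℕ).length) *
        (eta (strip []) + (-1) ^ (k+2) * (((k:ℤ)+2) + ([]:List ℕ).length) * derange (k+1)) = derange (k+2)
      simp only [show strip [] = [] from rfl, List.length_nil, eta]
      rw [show derange (k+2) = ((k:ℤ)+2)*derange (k+1) + (-1)^(k+2) from by
        rw [derange]; push_cast; ring]
      push_cast
      linear_combination (((k:ℤ)+2) * derange (k+1)) * hs

lemma eta_pair : ∀ m, eta [m+1, m+1] = (-1) ^ (m+1) * (derange (m+1) + derange (m+2)) := by
  intro m
  match m with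
  | 0 =>
      rw [eta]
      norm_num [strip, eta, derange]
  | (k+1) =>
      rw [eta]
      show ((-1:ℤ)) ^ (k + 2 + ([k+2]:List ℕ).length) *
        (eta (strip [k+2]) + (-1) ^ (k+2) * (((k:ℤ)+2) + ([k+2]:List ℕ).length) * eta (strip [k+2, k+2])) = _
      rw [strip_one, strip_two, eta_single (k+1), eta_pair k]
      have hs : ((-1:ℤ))^k * (-1)^k = 1 := by
        rw [← pow_add]; exact Even.neg_one_pow ⟨k, by ring⟩
      have hd2 : derange (k+2) = ((k:ℤ)+2) * derange (k+1) + (-1)^k := by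
        rw [derange]; push_cast; ring_nf
      have hd3 : derange (k+1+2) = ((k:ℤ)+3) * derange (k+2) - (-1)^k := by
        rw [derange]; push_cast; ring_nf
      rw [hd3]
      simp only [List.length_cons, List.length_nil]
      push_cast
      linear_combination ((-1:ℤ)^k * ((k:ℤ)+3) * (derange (k+1) + derange (k+2))) * hs
        - (-1:ℤ)^k * hd2

lemma eta_bb1 (m : ℕ) : eta [m+2, m+2, 1] =
    (-1) ^ m * (derange (m+1) - ((m:ℤ)+4) * (derange (m+1) + derange (m+2))) := by
  rw [eta]
  have h1 : strip [m+2, 1] = [m+1] := by simp [strip]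
  have h2 : strip [m+2, m+2, 1] = [m+1, m+1] := by simp [strip]
  show ((-1:ℤ)) ^ (m + 2 + ([m+2,1]:List ℕ).length) *
    (eta (strip [m+2,1]) + (-1) ^ (m+2) * (((m:ℤ)+2) + ([m+2,1]:List ℕ).length) * eta (strip [m+2, m+2, 1])) = _
  rw [h1, h2, eta_single (m+1), eta_pair m]
  have hs : ((-1:ℤ))^m * (-1)^m = 1 := by
    rw [← pow_add]; exact Even.neg_one_pow ⟨m, by ring⟩
  simp only [List.length_cons, List.length_nil]
  push_cast
  linear_combination (-((-1:ℤ)^m) * ((m:ℤ)+4) * (derange (m+1) + derange (m+2))) * hs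

lemma one_le_derange : ∀ m, 1 ≤ derange (m+2)
  | 0 => by norm_num [derange]
  | (k+1) => by
      have ih := one_le_derange k
      rw [derange]
      push_cast
      rcases neg_one_pow_eq_or ℤ (k+1+2) with h | h <;> rw [h] <;>
        nlinarith [Int.ofNat_nonneg k]

lemma derange_nonneg : ∀ m, 0 ≤ derange m
  | 0 => by norm_num [derange]
  | 1 => by norm_num [derange]
  | (k+2) => le_trans zero_le_one (one_le_derange k)


/-- For `b ≥ 2`, `|η_{(b,b,1)}| ≤ D_{b+1} + b D_b`, with equality iff `b = 2`. -/
theorem eta_abs_bb1_upper (b : ℕ) (hb : 2 ≤ b) :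
    |eta [b, b, 1]| ≤ derange (b + 1) + (b : ℤ) * derange b ∧
    (|eta [b, b, 1]| = derange (b + 1) + (b : ℤ) * derange b ↔ b = 2) := by
  obtain ⟨m, rfl⟩ : ∃ m, b = m + 2 := ⟨b - 2, by omega⟩
  have hd1 := derange_nonneg (m+1)
  have hd2n := derange_nonneg (m+2)
  have habs : |eta [m+2, m+2, 1]| = ((m:ℤ)+3) * derange (m+1) + ((m:ℤ)+4) * derange (m+2) := by
    rw [eta_bb1, abs_mul, abs_pow, abs_neg, abs_one, one_pow, one_mul,
      abs_of_nonpos (by nlinarith)]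
    ring
  have hd2 : derange (m+2) = ((m:ℤ)+2) * derange (m+1) + (-1)^m := by
    rw [derange]; push_cast; ring_nf
  have hd3 : derange (m+2+1) = ((m:ℤ)+3) * derange (m+2) - (-1)^m := by
    rw [derange]; push_cast; ring_nf
  have key : (derange (m+2+1) + ((m:ℤ)+2) * derange (m+2))
      - (((m:ℤ)+3) * derange (m+1) + ((m:ℤ)+4) * derange (m+2))
      = ((m:ℤ)^2 + 2*m - 1) * derange (m+1) + (m:ℤ) * (-1)^m := by
    linear_combination hd3 + ((m:ℤ)+1) * hd2
  rcases m with _ | k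
  · rw [habs]; norm_num [derange]
  · have h1 : 1 ≤ derange (k+1+1) := one_le_derange k
    have hlt : ((k:ℤ)+1+3) * derange (k+1+1) + ((k:ℤ)+1+4) * derange (k+1+2)
        < derange (k+1+2+1) + ((k:ℤ)+1+2) * derange (k+1+2) := by
      push_cast at key
      rcases neg_one_pow_eq_or ℤ (k+1) with h | h <;> rw [h] at key <;>
        nlinarith [Int.ofNat_nonneg k]
    rw [habs]
    push_cast
    constructor
    · push_cast at hlt; linarith
    · constructor
      · intro heq; exfalso; push_cast at hlt heq; linarith
      · intro h
        exact h.elim
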